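/- Let G be a finite abelian group with a nondegenerate symmetric Z/2-valued bilinear pairing b : G × G → Z/2, and let Ω : G → {±1} satisfy Ω(x+y) = Ω(x)Ω(y)(-1)^{b(x,y)} for all x,y. Then the Gauss sum arf(Ω) := |G|^{-1/2} Σ_{x∈G} Ω(x) takes values in {+1, -1}. -/

import Mathlib

lemma neg_one_pow_val_add (a c : ZMod 2) :
    ((-1 : ℝ)) ^ ((a + c).val) = (-1 : ℝ) ^ a.val * (-1 : ℝ) ^ c.val := by
  rw [ZMod.val_add, ← neg_one_pow_eq_pow_mod_two, pow_add]

/-- Let `G` be a finite abelian group with a nondegenerate symmetric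
`ℤ/2`-valued bilinear pairing `b`, and let `Ω : G → {±1}` satisfy
`Ω(x+y) = Ω(x)Ω(y)(-1)^{b(x,y)}`.  Then the Gauss sum
`arf(Ω) := |G|^{-1/2} ∑_{x ∈ G} Ω(x)` takes values in `{+1, -1}`. -/
theorem arf_invariant_pm_one {G : Type*} [AddCommGroup G] [Fintype G]
    (b : G → G → ZMod 2)
    (hbadd₁ : ∀ x y z, b (x + y) z = b x z + b y z)
    (hbadd₂ : ∀ x y z, b x (y + z) = b x y + b x z)
    (hbsymm : ∀ x y, b x y = b y x)
    (hbnd : ∀ x, (∀ y, b x y = 0) → x = 0)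
    (Ω : G → ℝ)
    (hval : ∀ x, Ω x = 1 ∨ Ω x = -1)
    (hquad : ∀ x y, Ω (x + y) = Ω x * Ω y * (-1 : ℝ) ^ (b x y).val) :
    (Real.sqrt (Fintype.card G))⁻¹ * ∑ x, Ω x = 1 ∨
      (Real.sqrt (Fintype.card G))⁻¹ * ∑ x, Ω x = -1 := by
  have hsq : ∀ x, Ω x * Ω x = 1 := by
    intro x; rcases hval x with h | h <;> rw [h] <;> norm_num
  have hb00 : ∀ z, b 0 z = 0 := by
    intro z
    have := hbadd₁ 0 0 z
    simpa using this
  have hΩ0 : Ω 0 = 1 := by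
    have h := hquad 0 0
    rw [hb00 0] at h
    simp at h
    rcases hval 0 with h0 | h0
    · exact h0
    · rw [h0] at h; norm_num at h
  -- character sum
  have hchar : ∀ z : G, z ≠ 0 → ∑ x, ((-1 : ℝ)) ^ (b x z).val = 0 := by
    intro z hz
    obtain ⟨y, hy⟩ : ∃ y, b y z ≠ 0 := by
      by_contra h
      push_neg at h
      exact hz (hbnd z fun w => by rw [hbsymm]; exact h w)
    have hy1 : b y z = 1 := by
      have h2 : ∀ a : ZMod 2, a ≠ 0 → a = 1 := by decide
      exact h2 _ hy
    have key : ∑ x, ((-1 : ℝ)) ^ (b x z).val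
        = ∑ x, ((-1 : ℝ)) ^ (b (x + y) z).val :=
      (Fintype.sum_equiv (Equiv.addRight y) _ _ (fun x => rfl)).symm
    have key2 : ∀ x : G, ((-1 : ℝ)) ^ (b (x + y) z).val
        = - ((-1 : ℝ)) ^ (b x z).val := by
      intro x
      rw [hbadd₁, neg_one_pow_val_add, hy1]
      norm_num [show ((1:ZMod 2)).val = 1 from rfl]
    have hsum : ∑ x, ((-1 : ℝ)) ^ (b x z).val = - ∑ x, ((-1 : ℝ)) ^ (b x z).val := by
      calc ∑ x, ((-1 : ℝ)) ^ (b x z).val = ∑ x, ((-1 : ℝ)) ^ (b (x + y) z).val := key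
        _ = ∑ x, - ((-1 : ℝ)) ^ (b x z).val := Finset.sum_congr rfl fun x _ => key2 x
        _ = - ∑ x, ((-1 : ℝ)) ^ (b x z).val := by rw [Finset.sum_neg_distrib]
    linarith
  set S := ∑ x, Ω x with hS
  have hS2 : S ^ 2 = (Fintype.card G : ℝ) := by
    have : S ^ 2 = ∑ x, ∑ y, Ω x * Ω y := by
      rw [sq, hS, Finset.sum_mul_sum]
    rw [this]
    have step : ∀ x : G, ∑ y, Ω x * Ω y = ∑ z, Ω z * ((-1:ℝ)) ^ (b x z).val := by
      intro x
      rw [← Fintype.sum_equiv (Equiv.addLeft x) (fun z => Ω x * Ω (x + z))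
        (fun y => Ω x * Ω y) (fun z => rfl)]
      refine Finset.sum_congr rfl fun z _ => ?_
      show Ω x * Ω (x + z) = _
      rw [hquad, ← mul_assoc, ← mul_assoc, hsq x, one_mul]
    calc ∑ x, ∑ y, Ω x * Ω y = ∑ x, ∑ z, Ω z * ((-1:ℝ)) ^ (b x z).val := by
          exact Finset.sum_congr rfl fun x _ => step x
      _ = ∑ z, Ω z * ∑ x, ((-1:ℝ)) ^ (b x z).val := by
          rw [Finset.sum_comm]
          exact Finset.sum_congr rfl fun z _ => (Finset.mul_sum _ _ _).symm
      _ = (Fintype.card G : ℝ) := by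
          rw [Finset.sum_eq_single 0]
          · rw [hΩ0, one_mul]
            have : ∀ x : G, ((-1:ℝ)) ^ (b x 0).val = 1 := by
              intro x
              rw [hbsymm, hb00]
              norm_num
            simp [this]
          · intro z _ hz
            rw [hchar z hz, mul_zero]
          · intro h; simp at h
  have hcpos : (0:ℝ) < Fintype.card G := by
    exact_mod_cast Fintype.card_pos
  have habs : |S| = Real.sqrt (Fintype.card G) := by
    rw [← Real.sqrt_sq_eq_abs, hS2]
  have hsqrtpos : 0 < Real.sqrt (Fintype.card G) := Real.sqrt_pos.mpr hcpos
  rcases abs_eq (le_of_lt hsqrtpos) |>.mp habs with h | h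
  · left; rw [h, inv_mul_cancel₀ (ne_of_gt hsqrtpos)]
  · right; rw [h]
    field_simp
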